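/- Let ω = exp(2πi/3), let α ∈ ℂ, and set x = h_0(α), x* = h_0(−α), x** = h_0((2+ω)·α). For every z ∈ ℂ satisfying |z · exp(ω^k · α)| < 1 for each k ∈ {0, 1, 2}, the ordinary generating function of the first aside-stream converges and Σ_{n≥0} h_0((n+ω)·α) · z^n = (x − (3·x² − x*)·z + x**·z²) / (1 − 3·x·z + 3·x*·z² − z³). -/

import Mathlib

open Complex Finset

/-- `ω = exp(2πi/3)`, the primitive cube root of unity. -/
noncomputable def om3 : ℂ := Complex.exp (2 * Real.pi * Complex.I / 3)

/-- The third-order hyperbolic function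
`h_k(z) = (1/3) · Σ_{s=0}^{2} ω^{−k·s} · exp(ω^s · z)`. -/
noncomputable def hfun3 (k : ℕ) (z : ℂ) : ℂ :=
  (1 / (3 : ℂ)) * ∑ s ∈ Finset.range 3, om3 ^ (-((k * s : ℕ) : ℤ)) * Complex.exp (om3 ^ s * z)

lemma om3_cube : om3 ^ 3 = 1 := by
  rw [om3, ← Complex.exp_nat_mul]
  rw [show ((3 : ℕ) : ℂ) * (2 * Real.pi * Complex.I / 3) = 2 * Real.pi * Complex.I by
    push_cast; ring]
  exact Complex.exp_two_pi_mul_I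

lemma om3_ne_one : om3 ≠ 1 := by
  intro h
  rw [om3, Complex.exp_eq_one_iff] at h
  obtain ⟨n, hn⟩ := h
  have hI : (2 * (Real.pi : ℂ) * Complex.I) ≠ 0 := by
    simp [Real.pi_ne_zero, Complex.I_ne_zero]
  have h' : (1 : ℂ) * (2 * Real.pi * Complex.I)
      = ((3 * n : ℤ) : ℂ) * (2 * Real.pi * Complex.I) := by
    push_cast
    field_simp at hn
    linear_combination (2 * Real.pi * Complex.I) * hn
  have h1 : (1 : ℂ) = ((3 * n : ℤ) : ℂ) := mul_right_cancel₀ hI h'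
  have : (3 * n : ℤ) = 1 := by exact_mod_cast h1.symm
  omega

lemma om3_sum : 1 + om3 + om3 ^ 2 = 0 := by
  have h : (om3 - 1) * (1 + om3 + om3 ^ 2) = 0 := by linear_combination om3_cube
  exact (mul_eq_zero.mp h).resolve_left (sub_ne_zero.mpr om3_ne_one)

lemma hfun3_zero (w : ℂ) : hfun3 0 w =
    1 / 3 * (Complex.exp (om3 ^ (0 : ℕ) * w) + Complex.exp (om3 ^ (1 : ℕ) * w)
      + Complex.exp (om3 ^ (2 : ℕ) * w)) := by
  simp [hfun3, Finset.sum_range_succ]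

/-- Ordinary generating function of the first aside-stream Tchebycheff 3-polynomials:
`Σ_{n≥0} h_0((n+ω)α)·zⁿ = (x − (3x² − x*)z + x**z²)/(1 − 3xz + 3x*z² − z³)`
with `x = h_0(α)`, `x* = h_0(−α)`, `x** = h_0((2+ω)α)`. -/
theorem ogf_aside_stream_one (α z : ℂ)
    (hz : ∀ k < 3, ‖z * Complex.exp (om3 ^ k * α)‖ < 1) :
    HasSum (fun n : ℕ => hfun3 0 (((n : ℂ) + om3) * α) * z ^ n)
      ((hfun3 0 α - (3 * hfun3 0 α ^ 2 - hfun3 0 (-α)) * z + hfun3 0 ((2 + om3) * α) * z ^ 2) /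
        (1 - 3 * hfun3 0 α * z + 3 * hfun3 0 (-α) * z ^ 2 - z ^ 3)) := by
  set A : ℕ → ℂ := fun s => Complex.exp (om3 ^ s * α) with hAdef
  have hz0 : ‖z * A 0‖ < 1 := hz 0 (by norm_num)
  have hz1 : ‖z * A 1‖ < 1 := hz 1 (by norm_num)
  have hz2 : ‖z * A 2‖ < 1 := hz 2 (by norm_num)
  have hne : ∀ k, ‖z * A k‖ < 1 → 1 - z * A k ≠ 0 := by
    intro k h hc
    have h1 : z * A k = 1 := by linear_combination -hc
    rw [h1] at h
    simp at h
  have hd0 := hne 0 hz0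
  have hd1 := hne 1 hz1
  have hd2 := hne 2 hz2
  -- geometric series
  have g0 : HasSum (fun n : ℕ => (z * A 0) ^ n) (1 - z * A 0)⁻¹ :=
    hasSum_geometric_of_norm_lt_one (by exact hz0)
  have g1 : HasSum (fun n : ℕ => (z * A 1) ^ n) (1 - z * A 1)⁻¹ :=
    hasSum_geometric_of_norm_lt_one (by exact hz1)
  have g2 : HasSum (fun n : ℕ => (z * A 2) ^ n) (1 - z * A 2)⁻¹ :=
    hasSum_geometric_of_norm_lt_one (by exact hz2)
  have H : HasSum
      (fun n : ℕ => 1 / 3 * (A 1 * (z * A 0) ^ n + A 2 * (z * A 1) ^ n + A 0 * (z * A 2) ^ n))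
      (1 / 3 * (A 1 * (1 - z * A 0)⁻¹ + A 2 * (1 - z * A 1)⁻¹ + A 0 * (1 - z * A 2)⁻¹)) := by
    have := (((g0.mul_left (A 1)).add (g1.mul_left (A 2))).add (g2.mul_left (A 0))).mul_left
      ((1 : ℂ) / 3)
    simpa [mul_add, add_assoc] using this
  -- term identification
  have hA : ∀ n : ℕ, hfun3 0 (((n : ℂ) + om3) * α) * z ^ n =
      1 / 3 * (A 1 * (z * A 0) ^ n + A 2 * (z * A 1) ^ n + A 0 * (z * A 2) ^ n) := by
    intro n
    have e0 : Complex.exp (om3 ^ (0 : ℕ) * (((n : ℂ) + om3) * α)) = A 0 ^ n * A 1 := by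
      show _ = Complex.exp (om3 ^ (0 : ℕ) * α) ^ n * Complex.exp (om3 ^ (1 : ℕ) * α)
      rw [show om3 ^ (0 : ℕ) * (((n : ℂ) + om3) * α)
          = (n : ℂ) * (om3 ^ (0 : ℕ) * α) + om3 ^ (1 : ℕ) * α by ring,
        Complex.exp_add, Complex.exp_nat_mul]
    have e1 : Complex.exp (om3 ^ (1 : ℕ) * (((n : ℂ) + om3) * α)) = A 1 ^ n * A 2 := by
      show _ = Complex.exp (om3 ^ (1 : ℕ) * α) ^ n * Complex.exp (om3 ^ (2 : ℕ) * α)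
      rw [show om3 ^ (1 : ℕ) * (((n : ℂ) + om3) * α)
          = (n : ℂ) * (om3 ^ (1 : ℕ) * α) + om3 ^ (2 : ℕ) * α by ring,
        Complex.exp_add, Complex.exp_nat_mul]
    have e2 : Complex.exp (om3 ^ (2 : ℕ) * (((n : ℂ) + om3) * α)) = A 2 ^ n * A 0 := by
      show _ = Complex.exp (om3 ^ (2 : ℕ) * α) ^ n * Complex.exp (om3 ^ (0 : ℕ) * α)
      rw [show om3 ^ (2 : ℕ) * (((n : ℂ) + om3) * α)
          = (n : ℂ) * (om3 ^ (2 : ℕ) * α) + om3 ^ (0 : ℕ) * α by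
            linear_combination α * om3_cube,
        Complex.exp_add, Complex.exp_nat_mul]
    rw [hfun3_zero, e0, e1, e2]
    ring
  -- product relation
  have hprod : A 0 * A 1 * A 2 = 1 := by
    simp only [hAdef]
    rw [← Complex.exp_add, ← Complex.exp_add,
      show om3 ^ 0 * α + om3 ^ 1 * α + om3 ^ 2 * α = (1 + om3 + om3 ^ 2) * α by ring,
      om3_sum, zero_mul, Complex.exp_zero]
  -- value identification
  have hx : hfun3 0 α = 1 / 3 * (A 0 + A 1 + A 2) := hfun3_zero α
  have hxs : hfun3 0 (-α) = 1 / 3 * (A 1 * A 2 + A 0 * A 2 + A 0 * A 1) := by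
    rw [hfun3_zero]
    have e : ∀ s : ℕ, Complex.exp (om3 ^ s * -α) = (A s)⁻¹ := by
      intro s
      show _ = (Complex.exp (om3 ^ s * α))⁻¹
      rw [← Complex.exp_neg]
      congr 1
      ring
    have hA0n : A 0 ≠ 0 := Complex.exp_ne_zero _
    have hA1n : A 1 ≠ 0 := Complex.exp_ne_zero _
    have hA2n : A 2 ≠ 0 := Complex.exp_ne_zero _
    have i0 : (A 0)⁻¹ = A 1 * A 2 := by
      apply inv_eq_of_mul_eq_one_right
      linear_combination hprod
    have i1 : (A 1)⁻¹ = A 0 * A 2 := by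
      apply inv_eq_of_mul_eq_one_right
      linear_combination hprod
    have i2 : (A 2)⁻¹ = A 0 * A 1 := by
      apply inv_eq_of_mul_eq_one_right
      linear_combination hprod
    rw [e 0, e 1, e 2, i0, i1, i2]
  have hxss : hfun3 0 ((2 + om3) * α) =
      1 / 3 * (A 0 ^ 2 * A 1 + A 1 ^ 2 * A 2 + A 2 ^ 2 * A 0) := by
    rw [hfun3_zero]
    have f0 : Complex.exp (om3 ^ (0 : ℕ) * ((2 + om3) * α)) = A 0 ^ 2 * A 1 := by
      show _ = Complex.exp (om3 ^ (0 : ℕ) * α) ^ 2 * Complex.exp (om3 ^ (1 : ℕ) * α)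
      rw [show om3 ^ (0 : ℕ) * ((2 + om3) * α)
          = ((2 : ℕ) : ℂ) * (om3 ^ (0 : ℕ) * α) + om3 ^ (1 : ℕ) * α by push_cast; ring,
        Complex.exp_add, Complex.exp_nat_mul]
    have f1 : Complex.exp (om3 ^ (1 : ℕ) * ((2 + om3) * α)) = A 1 ^ 2 * A 2 := by
      show _ = Complex.exp (om3 ^ (1 : ℕ) * α) ^ 2 * Complex.exp (om3 ^ (2 : ℕ) * α)
      rw [show om3 ^ (1 : ℕ) * ((2 + om3) * α)
          = ((2 : ℕ) : ℂ) * (om3 ^ (1 : ℕ) * α) + om3 ^ (2 : ℕ) * α by push_cast; ring,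
        Complex.exp_add, Complex.exp_nat_mul]
    have f2 : Complex.exp (om3 ^ (2 : ℕ) * ((2 + om3) * α)) = A 2 ^ 2 * A 0 := by
      show _ = Complex.exp (om3 ^ (2 : ℕ) * α) ^ 2 * Complex.exp (om3 ^ (0 : ℕ) * α)
      rw [show om3 ^ (2 : ℕ) * ((2 + om3) * α)
          = ((2 : ℕ) : ℂ) * (om3 ^ (2 : ℕ) * α) + om3 ^ (0 : ℕ) * α by
            push_cast; linear_combination α * om3_cube,
        Complex.exp_add, Complex.exp_nat_mul]
    rw [f0, f1, f2]
  have hval : (hfun3 0 α - (3 * hfun3 0 α ^ 2 - hfun3 0 (-α)) * z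
        + hfun3 0 ((2 + om3) * α) * z ^ 2) /
        (1 - 3 * hfun3 0 α * z + 3 * hfun3 0 (-α) * z ^ 2 - z ^ 3) =
      1 / 3 * (A 1 * (1 - z * A 0)⁻¹ + A 2 * (1 - z * A 1)⁻¹ + A 0 * (1 - z * A 2)⁻¹) := by
    have hD : 1 - 3 * hfun3 0 α * z + 3 * hfun3 0 (-α) * z ^ 2 - z ^ 3 =
        (1 - z * A 0) * (1 - z * A 1) * (1 - z * A 2) := by
      rw [hx, hxs]
      linear_combination z ^ 3 * hprod
    rw [hD, hx, hxs, hxss,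
      div_eq_iff (mul_ne_zero (mul_ne_zero hd0 hd1) hd2)]
    linear_combination (-(1 / 3) * A 1 * (1 - z * A 1) * (1 - z * A 2)) * mul_inv_cancel₀ hd0
      - (1 / 3) * A 2 * (1 - z * A 0) * (1 - z * A 2) * mul_inv_cancel₀ hd1
      - (1 / 3) * A 0 * (1 - z * A 0) * (1 - z * A 1) * mul_inv_cancel₀ hd2
  have hfun : (fun n : ℕ => hfun3 0 (((n : ℂ) + om3) * α) * z ^ n)
      = fun n : ℕ => 1 / 3 * (A 1 * (z * A 0) ^ n + A 2 * (z * A 1) ^ n + A 0 * (z * A 2) ^ n) :=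
    funext hA
  rw [hval, hfun]
  exact H
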